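/- Let σ and τ be sign sequences with τ ⪯ σ (τ is a subsequence of σ such that the prefix of σ before the first selected index, and each block of σ strictly between consecutive selected indices, contains an even number of zeros). If the numbers of zeros of σ and τ have the same parity and τ is good, then σ is good. If the parities differ and τ is reversing, then σ is good. -/

import Mathlib

/-- A pattern: a cyclically ordered partition of the four colours (here
`Fin 4`) into a pair and two singletons, recorded canonically as the pair
followed by the two singletons `{x}`, `{y}` in cyclic order. -/
structure Pattern where
  pair : Finset (Fin 4)
  x : Fin 4
  y : Fin 4
  pair_card : pair.card = 2
  x_not_mem : x ∉ pair
  y_not_mem : y ∉ pair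
  x_ne_y : x ≠ y
deriving DecidableEq

/-- `ρ` is `+`-compatible with `π`: either `ρ = π`, or `ρ` is obtained from `π`
by moving one of the paired colours to the preceding part (in cyclic order). -/
def PlusCompat (π ρ : Pattern) : Prop :=
  ρ = π ∨ ∃ u ∈ π.pair, ∃ v ∈ π.pair, u ≠ v ∧
    ρ.pair = {π.y, u} ∧ ρ.x = v ∧ ρ.y = π.x

/-- `π` and `ρ` are `0`-compatible: the pair of `ρ` consists of the two colours
unpaired in `π`, and vice versa (this relation is symmetric; these are the
undirected edges of the auxiliary graph `D`). -/
def ZeroCompat (π ρ : Pattern) : Prop :=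
  ρ.pair = {π.x, π.y} ∧ π.pair = {ρ.x, ρ.y}

/-- `IsStroll σ π τ`: there is a `σ`-stroll in the auxiliary graph `D` from the
pattern `π` to the pattern `τ`.  Signs are elements of `ZMod 3`, with `1`
standing for `+` and `2` for `−`. -/
inductive IsStroll : List (ZMod 3) → Pattern → Pattern → Prop
  | nil (π : Pattern) : IsStroll [] π π
  | zero {σ : List (ZMod 3)} {π ρ τ : Pattern} :
      ZeroCompat π ρ → IsStroll σ ρ τ → IsStroll (0 :: σ) π τ
  | plus {σ : List (ZMod 3)} {π ρ τ : Pattern} :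
      PlusCompat π ρ → IsStroll σ ρ τ → IsStroll (1 :: σ) π τ
  | minus {σ : List (ZMod 3)} {π ρ τ : Pattern} :
      PlusCompat ρ π → IsStroll σ ρ τ → IsStroll (2 :: σ) π τ

/-- The pattern `({1,2},{3},{4})`. -/
def basePattern : Pattern :=
  ⟨{0, 1}, 2, 3, by decide, by decide, by decide, by decide⟩

/-- The pattern `({1,2},{4},{3})`. -/
def goodEnd : Pattern :=
  ⟨{0, 1}, 3, 2, by decide, by decide, by decide, by decide⟩

/-- The pattern `({3,4},{1},{2})`. -/
def reversingEnd : Pattern :=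
  ⟨{2, 3}, 0, 1, by decide, by decide, by decide, by decide⟩

/-- A sign sequence is good if some stroll runs from `({1,2},{3},{4})` to
`({1,2},{4},{3})`. -/
def GoodSeq (σ : List (ZMod 3)) : Prop := IsStroll σ basePattern goodEnd

/-- A sign sequence is reversing if some stroll runs from `({1,2},{3},{4})` to
`({3,4},{1},{2})`. -/
def ReversingSeq (σ : List (ZMod 3)) : Prop := IsStroll σ basePattern reversingEnd

/-- The order `τ ⪯ σ` on sign sequences: `τ` is a subsequence of `σ` such that
the block of `σ` before the first selected entry, and each block strictly
between consecutive selected entries, contains an even number of zeros. -/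
inductive Precedes : List (ZMod 3) → List (ZMod 3) → Prop
  | nil (σ : List (ZMod 3)) : Precedes [] σ
  | cons (g : List (ZMod 3)) (t : ZMod 3) (τ σ : List (ZMod 3)) :
      Even (g.count 0) → Precedes τ σ → Precedes (t :: τ) (g ++ t :: σ)

lemma zeroCompat_symm {π ρ : Pattern} (h : ZeroCompat π ρ) : ZeroCompat ρ π :=
  ⟨h.2, h.1⟩

lemma exists_zeroCompat (π : Pattern) : ∃ ρ, ZeroCompat π ρ := by
  obtain ⟨a, b, hab, hp⟩ := Finset.card_eq_two.mp π.pair_card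
  have ha : a ∈ π.pair := by rw [hp]; simp
  have hb : b ∈ π.pair := by rw [hp]; simp
  refine ⟨⟨{π.x, π.y}, a, b, Finset.card_pair π.x_ne_y, ?_, ?_, hab⟩, rfl, hp⟩
  · simp only [Finset.mem_insert, Finset.mem_singleton]
    rintro (rfl | rfl)
    exacts [π.x_not_mem ha, π.y_not_mem ha]
  · simp only [Finset.mem_insert, Finset.mem_singleton]
    rintro (rfl | rfl)
    exacts [π.x_not_mem hb, π.y_not_mem hb]

lemma stroll_loop (l : List (ZMod 3)) : ∀ π : Pattern,
    (Even (l.count 0) → IsStroll l π π) ∧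
    (¬ Even (l.count 0) → ∀ ρ, ZeroCompat π ρ → IsStroll l π ρ) := by
  induction l with
  | nil =>
    intro π
    exact ⟨fun _ => .nil π, fun h => absurd (by simp) h⟩
  | cons t l ih =>
    intro π
    have ht : t = 0 ∨ t = 1 ∨ t = 2 := by revert t; decide
    constructor
    · intro he
      rcases ht with rfl | rfl | rfl
      · obtain ⟨ρ, hρ⟩ := exists_zeroCompat π
        have hodd : ¬ Even (l.count 0) := by
          simp only [List.count_cons, if_pos rfl] at he
          exact Nat.even_add_one.mp he
        exact .zero hρ ((ih ρ).2 hodd π (zeroCompat_symm hρ))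
      · exact .plus (Or.inl rfl) ((ih π).1 (by simpa [List.count_cons] using he))
      · exact .minus (Or.inl rfl) ((ih π).1 (by simpa [List.count_cons, show (2 : ZMod 3) ≠ 0 by decide] using he))
    · intro he ρ hρ
      rcases ht with rfl | rfl | rfl
      · have hev : Even (l.count 0) := by
          by_contra hc
          exact he (by simp only [List.count_cons, if_pos rfl]; exact Nat.even_add_one.mpr hc)
        exact .zero hρ ((ih ρ).1 hev)
      · exact .plus (Or.inl rfl) ((ih π).2 (by simpa [List.count_cons] using he) ρ hρ)
      · exact .minus (Or.inl rfl) ((ih π).2 (by simpa [List.count_cons, show (2 : ZMod 3) ≠ 0 by decide] using he) ρ hρ)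

lemma IsStroll.append {l₁ l₂ : List (ZMod 3)} {π ρ ω : Pattern}
    (h₁ : IsStroll l₁ π ρ) (h₂ : IsStroll l₂ ρ ω) : IsStroll (l₁ ++ l₂) π ω := by
  induction h₁ with
  | nil _ => exact h₂
  | zero hc _ ih => exact .zero hc (ih h₂)
  | plus hc _ ih => exact .plus hc (ih h₂)
  | minus hc _ ih => exact .minus hc (ih h₂)

lemma stroll_cons_inv {t : ZMod 3} {τ : List (ZMod 3)} {π ω : Pattern}
    (h : IsStroll (t :: τ) π ω) :
    ∃ ρ, IsStroll τ ρ ω ∧ ∀ l (ω' : Pattern), IsStroll l ρ ω' → IsStroll (t :: l) π ω' := by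
  cases h with
  | zero hc hr => exact ⟨_, hr, fun l ω' h' => .zero hc h'⟩
  | plus hc hr => exact ⟨_, hr, fun l ω' h' => .plus hc h'⟩
  | minus hc hr => exact ⟨_, hr, fun l ω' h' => .minus hc h'⟩

lemma key_lemma {τ σ : List (ZMod 3)} (h : Precedes τ σ) :
    ∀ π ω : Pattern, IsStroll τ π ω →
    (σ.count 0 % 2 = τ.count 0 % 2 → IsStroll σ π ω) ∧
    (σ.count 0 % 2 ≠ τ.count 0 % 2 → ∀ ρ, ZeroCompat ω ρ → IsStroll σ π ρ) := by
  induction h with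
  | nil σ =>
    intro π ω hs
    cases hs
    constructor
    · intro hp
      exact (stroll_loop σ π).1 (Nat.even_iff.mpr (by simpa using hp))
    · intro hp ρ hρ
      refine (stroll_loop σ π).2 (fun hev => hp ?_) ρ hρ
      simp [Nat.even_iff.mp hev]
  | cons g t τ σ hg hpre ih =>
    intro π ω hs
    obtain ⟨ρ, hrest, hstep⟩ := stroll_cons_inv hs
    have loop : IsStroll g π π := (stroll_loop g π).1 hg
    have ihρ := ih ρ ω hrest
    obtain ⟨k, hk⟩ := hg
    have e1 : (g ++ t :: σ).count 0 % 2 = (t :: τ).count 0 % 2 ↔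
        σ.count 0 % 2 = τ.count 0 % 2 := by
      rw [List.count_append, List.count_cons, List.count_cons, hk]
      split_ifs <;> omega
    constructor
    · intro hp
      exact loop.append (hstep σ ω (ihρ.1 (e1.mp hp)))
    · intro hp ρ' hρ'
      exact loop.append (hstep σ ρ' (ihρ.2 (fun hc => hp (e1.mpr hc)) ρ' hρ'))

/-- If `τ ⪯ σ` then: (i) if `σ` and `τ` have the same parity of number of
zeros and `τ` is good, then `σ` is good; (ii) if the parities differ and `τ` is
reversing, then `σ` is good. -/
theorem good_of_precedes (σ τ : List (ZMod 3)) (h : Precedes τ σ) :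
    (σ.count 0 % 2 = τ.count 0 % 2 → GoodSeq τ → GoodSeq σ) ∧
      (σ.count 0 % 2 ≠ τ.count 0 % 2 → ReversingSeq τ → GoodSeq σ) := by
  refine ⟨fun hp hg => (key_lemma h _ _ hg).1 hp,
    fun hp hr => (key_lemma h _ _ hr).2 hp goodEnd ⟨by decide, by decide⟩⟩
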